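/- For the function H(x,y,m) = (2x−y)/(1+x−y+2(x−y)²)^{m−1}, if m≥6, 0≤y₁≤x₁≤1, 0≤y₂≤x₂≤1, then |H(x₁,y₁,m) − H(x₂,y₂,m)| ≤ (m−2)(|x₁−x₂| + |y₁−y₂|). -/

import Mathlib

lemma keypoly (k : ℕ) (hk : 5 ≤ k) (t : ℝ) (ht0 : 0 ≤ t) :
    (k : ℝ) * (1 + t) * (1 + 4 * t) ≤ ((k:ℝ) - 1) * (1 + t + 2 * t ^ 2) ^ (k + 1) + (1 + t + 2 * t ^ 2) := by
  have hk' : (5:ℝ) ≤ (k:ℝ) := by exact_mod_cast hk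
  have ha : (0:ℝ) ≤ t + 2 * t ^ 2 := by nlinarith
  have hbern : 1 + ((k:ℝ) + 1) * (t + 2 * t ^ 2) ≤ (1 + t + 2 * t ^ 2) ^ (k + 1) := by
    have := one_add_mul_le_pow (show (-2:ℝ) ≤ t + 2 * t ^ 2 by linarith) (k + 1)
    calc 1 + ((k:ℝ) + 1) * (t + 2 * t ^ 2) = 1 + ((k+1 : ℕ):ℝ) * (t + 2 * t ^ 2) := by push_cast; ring
    _ ≤ (1 + (t + 2 * t ^ 2)) ^ (k+1) := this
    _ = (1 + t + 2 * t ^ 2) ^ (k + 1) := by ring_nf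
  have h2 : ((k:ℝ)-1) * (1 + ((k:ℝ)+1) * (t + 2*t^2)) ≤ ((k:ℝ)-1) * (1 + t + 2 * t ^ 2) ^ (k + 1) :=
    mul_le_mul_of_nonneg_left hbern (by linarith)
  nlinarith [mul_nonneg (mul_nonneg (show (0:ℝ) ≤ (k:ℝ)-5 by linarith) (Nat.cast_nonneg k : (0:ℝ) ≤ k)) ht0,
    mul_nonneg (mul_nonneg (mul_nonneg (show (0:ℝ) ≤ (k:ℝ)-2 by linarith) (Nat.cast_nonneg k : (0:ℝ) ≤ k)) ht0) ht0]
lemma keyA (k : ℕ) (hk : 5 ≤ k) (t n : ℝ) (ht0 : 0 ≤ t) (hn0 : 0 ≤ n) (hn : n ≤ 1 + t) :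
    |2 * (1 + t + 2 * t ^ 2) - n * (k:ℝ) * (1 + 4 * t)| ≤ ((k:ℝ) - 1) * (1 + t + 2 * t ^ 2) ^ (k + 1) := by
  have hk' : (5:ℝ) ≤ (k:ℝ) := by exact_mod_cast hk
  have hd1 : (1:ℝ) ≤ 1 + t + 2 * t ^ 2 := by nlinarith
  have hdp : (1 + t + 2*t^2 : ℝ) ≤ (1 + t + 2 * t ^ 2) ^ (k + 1) := by
    calc (1 + t + 2*t^2 : ℝ) = (1 + t + 2*t^2) ^ 1 := (pow_one _).symm
    _ ≤ _ := pow_le_pow_right₀ hd1 (by omega)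
  have hnk : n * (k:ℝ) * (1 + 4*t) ≤ (k:ℝ) * (1 + t) * (1 + 4 * t) := by
    have h4 : (0:ℝ) ≤ 1 + 4 * t := by linarith
    nlinarith [mul_nonneg (Nat.cast_nonneg k : (0:ℝ) ≤ k) h4]
  have hnk0 : 0 ≤ n * (k:ℝ) * (1 + 4*t) :=
    mul_nonneg (mul_nonneg hn0 (Nat.cast_nonneg k)) (by linarith)
  have hkp := keypoly k hk t ht0
  rw [abs_le]
  constructor <;> nlinarith

lemma keyB (k : ℕ) (hk : 5 ≤ k) (t n : ℝ) (ht0 : 0 ≤ t) (hn0 : 0 ≤ n) (hn : n ≤ 1 + t) :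
    |-(1 + t + 2 * t ^ 2) + n * (k:ℝ) * (1 + 4 * t)| ≤ ((k:ℝ) - 1) * (1 + t + 2 * t ^ 2) ^ (k + 1) := by
  have hk' : (5:ℝ) ≤ (k:ℝ) := by exact_mod_cast hk
  have hd1 : (1:ℝ) ≤ 1 + t + 2 * t ^ 2 := by nlinarith
  have hdp : (1 + t + 2*t^2 : ℝ) ≤ (1 + t + 2 * t ^ 2) ^ (k + 1) := by
    calc (1 + t + 2*t^2 : ℝ) = (1 + t + 2*t^2) ^ 1 := (pow_one _).symm
    _ ≤ _ := pow_le_pow_right₀ hd1 (by omega)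
  have hnk : n * (k:ℝ) * (1 + 4*t) ≤ (k:ℝ) * (1 + t) * (1 + 4 * t) := by
    have h4 : (0:ℝ) ≤ 1 + 4 * t := by linarith
    nlinarith [mul_nonneg (Nat.cast_nonneg k : (0:ℝ) ≤ k) h4]
  have hnk0 : 0 ≤ n * (k:ℝ) * (1 + 4*t) :=
    mul_nonneg (mul_nonneg hn0 (Nat.cast_nonneg k)) (by linarith)
  have hkp := keypoly k hk t ht0
  rw [abs_le]
  constructor <;> nlinarith
lemma derivbound (k : ℕ) (hk : 5 ≤ k) (x₁ y₁ x₂ y₂ t n : ℝ)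
    (ht0 : 0 ≤ t) (hn0 : 0 ≤ n) (hn : n ≤ 1 + t) :
    |(((2*x₁-y₁)-(2*x₂-y₂)) * (1+t+2*t^2) ^ k -
        n * ((k:ℝ) * (1+t+2*t^2) ^ (k-1) * (((x₁-y₁)-(x₂-y₂)) + 4 * t * ((x₁-y₁)-(x₂-y₂)))))
      / ((1+t+2*t^2) ^ k)^2|
    ≤ ((k:ℝ)-1) * (|x₁-x₂| + |y₁-y₂|) := by
  have hk' : (5:ℝ) ≤ (k:ℝ) := by exact_mod_cast hk
  set d : ℝ := 1 + t + 2*t^2 with hd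
  have hd1 : (1:ℝ) ≤ d := by nlinarith
  have hdpos : (0:ℝ) < d := by linarith
  have hpk : d ^ (k-1) * d = d ^ k := pow_sub_one_mul (by omega) d
  have hA := keyA k hk t n ht0 hn0 hn
  have hB := keyB k hk t n ht0 hn0 hn
  have hnum : (((2*x₁-y₁)-(2*x₂-y₂)) * d ^ k -
        n * ((k:ℝ) * d ^ (k-1) * (((x₁-y₁)-(x₂-y₂)) + 4 * t * ((x₁-y₁)-(x₂-y₂)))))
      = d ^ (k-1) * ((x₁-x₂) * (2 * d - n * (k:ℝ) * (1 + 4*t))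
          + (y₁-y₂) * (-d + n * (k:ℝ) * (1 + 4*t))) := by
    rw [← hpk]; ring
  have hden : (d ^ k)^2 = d ^ (k-1) * d ^ (k+1) := by
    rw [← pow_mul, ← pow_add]; congr 1; omega
  rw [hnum, hden, abs_div, abs_mul, abs_mul, abs_of_pos (pow_pos hdpos _),
    abs_of_pos (pow_pos hdpos _),
    mul_div_mul_left _ _ (ne_of_gt (pow_pos hdpos (k-1)))]
  rw [div_le_iff₀ (pow_pos hdpos (k+1))]
  calc |(x₁-x₂) * (2 * d - n * (k:ℝ) * (1 + 4*t)) + (y₁-y₂) * (-d + n * (k:ℝ) * (1 + 4*t))|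
      ≤ |(x₁-x₂) * (2 * d - n * (k:ℝ) * (1 + 4*t))| + |(y₁-y₂) * (-d + n * (k:ℝ) * (1 + 4*t))| :=
        abs_add_le _ _
    _ ≤ |x₁-x₂| * (((k:ℝ)-1) * d ^ (k+1)) + |y₁-y₂| * (((k:ℝ)-1) * d ^ (k+1)) := by
        rw [abs_mul, abs_mul]
        exact add_le_add (mul_le_mul_of_nonneg_left hA (abs_nonneg _))
          (mul_le_mul_of_nonneg_left hB (abs_nonneg _))
    _ = ((k:ℝ)-1) * (|x₁-x₂| + |y₁-y₂|) * d ^ (k+1) := by ring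
lemma mainaux (k : ℕ) (hk : 5 ≤ k)
    (x₁ y₁ x₂ y₂ : ℝ)
    (h₁ : 0 ≤ y₁) (h₂ : y₁ ≤ x₁) (h₃ : x₁ ≤ 1)
    (h₄ : 0 ≤ y₂) (h₅ : y₂ ≤ x₂) (h₆ : x₂ ≤ 1) :
    |(2 * x₁ - y₁) / (1 + x₁ - y₁ + 2 * (x₁ - y₁) ^ 2) ^ k
      - (2 * x₂ - y₂) / (1 + x₂ - y₂ + 2 * (x₂ - y₂) ^ 2) ^ k|
    ≤ ((k:ℝ) - 1) * (|x₁ - x₂| + |y₁ - y₂|) := by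
  set bu : ℝ := (x₁ - y₁) - (x₂ - y₂) with hbu
  set bn : ℝ := (2*x₁ - y₁) - (2*x₂ - y₂) with hbn
  set u : ℝ → ℝ := fun s => (x₂ - y₂) + s * bu with hu_def
  set n : ℝ → ℝ := fun s => (2*x₂ - y₂) + s * bn with hn_def
  set f : ℝ → ℝ := fun s => n s / (1 + u s + 2 * u s ^ 2) ^ k with hf_def
  set f' : ℝ → ℝ := fun s =>
    (bn * (1 + u s + 2 * u s ^ 2) ^ k -
      n s * ((k:ℝ) * (1 + u s + 2 * u s ^ 2) ^ (k-1) * (bu + 4 * u s * bu)))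
    / ((1 + u s + 2 * u s ^ 2) ^ k) ^ 2 with hf'_def
  -- basic facts at points of Icc 0 1
  have hrange : ∀ s ∈ Set.Icc (0:ℝ) 1, 0 ≤ u s ∧ 0 ≤ n s ∧ n s ≤ 1 + u s := by
    rintro s ⟨hs0, hs1⟩
    have hu' : u s = (1-s) * (x₂ - y₂) + s * (x₁ - y₁) := by simp only [hu_def, hbu]; ring
    have hn' : n s = (1-s) * (2*x₂ - y₂) + s * (2*x₁ - y₁) := by simp only [hn_def, hbn]; ring
    refine ⟨?_, ?_, ?_⟩
    · rw [hu']
      have := mul_nonneg (by linarith : (0:ℝ) ≤ 1 - s) (by linarith : (0:ℝ) ≤ x₂ - y₂)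
      have := mul_nonneg hs0 (by linarith : (0:ℝ) ≤ x₁ - y₁)
      linarith
    · rw [hn']
      have := mul_nonneg (by linarith : (0:ℝ) ≤ 1 - s) (by linarith : (0:ℝ) ≤ 2*x₂ - y₂)
      have := mul_nonneg hs0 (by linarith : (0:ℝ) ≤ 2*x₁ - y₁)
      linarith
    · rw [hn', hu']
      nlinarith [mul_nonneg (by linarith : (0:ℝ) ≤ 1 - s) (by linarith : (0:ℝ) ≤ 1 - x₂),
        mul_nonneg hs0 (by linarith : (0:ℝ) ≤ 1 - x₁)]
  have hderiv : ∀ s ∈ Set.Icc (0:ℝ) 1, HasDerivWithinAt f (f' s) (Set.Icc 0 1) s := by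
    intro s hs
    obtain ⟨ht0, -, -⟩ := hrange s hs
    have hu : HasDerivAt u bu s := by
      simpa [hu_def] using ((hasDerivAt_id s).mul_const bu).const_add (x₂ - y₂)
    have hnn : HasDerivAt n bn s := by
      simpa [hn_def] using ((hasDerivAt_id s).mul_const bn).const_add (2*x₂ - y₂)
    have hd : HasDerivAt (fun s => 1 + u s + 2 * u s ^ 2) (bu + 4 * u s * bu) s := by
      have h2 : HasDerivAt (fun s => 2 * u s ^ 2) (2 * (2 * u s ^ 1 * bu)) s :=
        (hu.pow 2).const_mul 2
      have h3 : HasDerivAt (fun s => 1 + (u s + 2 * u s ^ 2)) (bu + 2 * (2 * u s ^ 1 * bu)) s :=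
        (hu.add h2).const_add 1
      have hfun : (fun s => 1 + u s + 2 * u s ^ 2) = (fun s => 1 + (u s + 2 * u s ^ 2)) := by
        funext s; ring
      rw [hfun]
      convert h3 using 1; ring
    have hdk := hd.pow k
    have hne : (1 + u s + 2 * u s ^ 2) ^ k ≠ 0 := by positivity
    exact ((hnn.div hdk hne).hasDerivWithinAt)
  have hbound : ∀ s ∈ Set.Icc (0:ℝ) 1, ‖f' s‖ ≤ ((k:ℝ)-1) * (|x₁ - x₂| + |y₁ - y₂|) := by
    intro s hs
    obtain ⟨ht0, hn0, hnle⟩ := hrange s hs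
    rw [Real.norm_eq_abs, hf'_def]
    have := derivbound k hk x₁ y₁ x₂ y₂ (u s) (n s) ht0 hn0 hnle
    simpa [hbn, hbu] using this
  have hmvt := Convex.norm_image_sub_le_of_norm_hasDerivWithin_le hderiv hbound
    (convex_Icc 0 1) (Set.left_mem_Icc.2 zero_le_one) (Set.right_mem_Icc.2 zero_le_one)
  have hf1 : f 1 = (2 * x₁ - y₁) / (1 + x₁ - y₁ + 2 * (x₁ - y₁) ^ 2) ^ k := by
    have e1 : n 1 = 2 * x₁ - y₁ := by simp [hn_def, hbn]
    have e2 : 1 + u 1 + 2 * u 1 ^ 2 = 1 + x₁ - y₁ + 2 * (x₁ - y₁) ^ 2 := by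
      simp [hu_def, hbu]; ring
    rw [hf_def]; simp only []; rw [e1, e2]
  have hf0 : f 0 = (2 * x₂ - y₂) / (1 + x₂ - y₂ + 2 * (x₂ - y₂) ^ 2) ^ k := by
    have e1 : n 0 = 2 * x₂ - y₂ := by simp [hn_def]
    have e2 : 1 + u 0 + 2 * u 0 ^ 2 = 1 + x₂ - y₂ + 2 * (x₂ - y₂) ^ 2 := by
      simp [hu_def]; ring
    rw [hf_def]; simp only []; rw [e1, e2]
  rw [hf1, hf0] at hmvt
  simpa [Real.norm_eq_abs] using hmvt

/-- For `H(x,y,m) = (2x−y)/(1+x−y+2(x−y)²)^{m−1}`, if `m ≥ 6`,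
`0 ≤ y₁ ≤ x₁ ≤ 1` and `0 ≤ y₂ ≤ x₂ ≤ 1`, then
`|H(x₁,y₁,m) − H(x₂,y₂,m)| ≤ (m−2)(|x₁−x₂| + |y₁−y₂|)`. -/
theorem H_lipschitz_bound
    (H : ℝ → ℝ → ℕ → ℝ)
    (hH : ∀ x y m, H x y m = (2 * x - y) / (1 + x - y + 2 * (x - y) ^ 2) ^ (m - 1))
    (m : ℕ) (hm : 6 ≤ m)
    (x₁ y₁ x₂ y₂ : ℝ)
    (h₁ : 0 ≤ y₁) (h₂ : y₁ ≤ x₁) (h₃ : x₁ ≤ 1)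
    (h₄ : 0 ≤ y₂) (h₅ : y₂ ≤ x₂) (h₆ : x₂ ≤ 1) :
    |H x₁ y₁ m - H x₂ y₂ m| ≤ ((m : ℝ) - 2) * (|x₁ - x₂| + |y₁ - y₂|) := by
  rw [hH, hH]
  have hk : 5 ≤ m - 1 := by omega
  have hkc : ((m - 1 : ℕ) : ℝ) = (m : ℝ) - 1 := by
    have h1 : 1 ≤ m := by omega
    push_cast [Nat.cast_sub h1]
    ring
  have := mainaux (m - 1) hk x₁ y₁ x₂ y₂ h₁ h₂ h₃ h₄ h₅ h₆
  rw [hkc] at this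
  calc _ ≤ ((m:ℝ) - 1 - 1) * (|x₁ - x₂| + |y₁ - y₂|) := this
    _ = ((m : ℝ) - 2) * (|x₁ - x₂| + |y₁ - y₂|) := by ring
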